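/- Assume R is Noetherian. If the ideal (gen1, gen2, gen3, gen4, gen5) of R contains an R-regular sequence of length 3 (i.e., has grade at least 3), then the complex Q is acyclic: the linear map given by q3 is injective, the kernel of the linear map given by q2 equals the image of the linear map given by q3, and the kernel of the linear map given by q1 equals the image of the linear map given by q2. -/

import Mathlib

/-- The data of the complex `Q`: seventeen elements of a commutative ring. -/
structure QData (R : Type*) where
  (a11 a12 a13 a21 a22 a23 l11 l12 l13 l21 l22 l23 p12 p13 p23 z1 z2 : R)

namespace QData

variable {R : Type*} [CommRing R] (d : QData R)

def E : R := d.p23*d.a11 - d.p13*d.a12 + d.p12*d.a13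

def F : R := d.p23*d.a21 - d.p13*d.a22 + d.p12*d.a23

def dd : R := (d.a11*d.l21 - d.a21*d.l11) + (d.a12*d.l22 - d.a22*d.l12) + (d.a13*d.l23 - d.a23*d.l13)

def gen1 : R := -(d.p23*(d.l12*d.l23 - d.l13*d.l22) + d.p13*(d.l11*d.l23 - d.l13*d.l21) + d.p12*(d.l11*d.l22 - d.l12*d.l21)) - d.z2*d.dd - d.z2*d.z1

def gen2 : R := d.E*d.l21 - d.F*d.l11 - d.z2*(d.a12*d.a23 - d.a13*d.a22) + d.z1*d.p23

def gen3 : R := d.E*d.l22 - d.F*d.l12 + d.z2*(d.a11*d.a23 - d.a13*d.a21) - d.z1*d.p13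

def gen4 : R := d.E*d.l23 - d.F*d.l13 - d.z2*(d.a11*d.a22 - d.a12*d.a21) + d.z1*d.p12

def gen5 : R := -((d.a11*d.l11 + d.a12*d.l12 + d.a13*d.l13)*(d.a21*d.l21 + d.a22*d.l22 + d.a23*d.l23) - (d.a11*d.l21 + d.a12*d.l22 + d.a13*d.l23)*(d.a21*d.l11 + d.a22*d.l12 + d.a23*d.l13)) - d.z1*d.dd - d.z1^2

/-- The first differential of `Q` (a `1 × 5` matrix). -/
def q1 : Matrix (Fin 1) (Fin 5) R :=
  !![d.gen1, d.gen2, d.gen3, d.gen4, d.gen5]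

/-- The second differential of `Q` (a `5 × 6` matrix). -/
def q2 : Matrix (Fin 5) (Fin 6) R :=
  !![d.p12*d.a23 - d.p13*d.a22 + d.p23*d.a21, -d.p12*d.a13 + d.p13*d.a12 - d.p23*d.a11, d.z1, d.a12*d.a23 - d.a13*d.a22, -(d.a11*d.a23 - d.a13*d.a21), d.a11*d.a22 - d.a12*d.a21;
     -d.l22*d.p12 - d.l23*d.p13 + d.z2*d.a21, d.p12*d.l12 + d.p13*d.l13 - d.z2*d.a11, d.l12*d.l23 - d.l13*d.l22, -(d.a12*d.l22 - d.a22*d.l12) - (d.a13*d.l23 - d.a23*d.l13) - d.z1, d.a11*d.l22 - d.a21*d.l12, d.a11*d.l23 - d.a21*d.l13;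
     d.l21*d.p12 - d.l23*d.p23 + d.z2*d.a22, -d.p12*d.l11 + d.p23*d.l13 - d.z2*d.a12, -(d.l11*d.l23 - d.l13*d.l21), d.a12*d.l21 - d.a22*d.l11, -(d.a11*d.l21 - d.a21*d.l11) - (d.a13*d.l23 - d.a23*d.l13) - d.z1, d.a12*d.l23 - d.a22*d.l13;
     d.l21*d.p13 + d.l22*d.p23 + d.z2*d.a23, -d.p13*d.l11 - d.p23*d.l12 - d.z2*d.a13, d.l11*d.l22 - d.l12*d.l21, d.a13*d.l21 - d.a23*d.l11, d.a13*d.l22 - d.a23*d.l12, -(d.a11*d.l21 - d.a21*d.l11) - (d.a12*d.l22 - d.a22*d.l12) - d.z1;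
     0, 0, -d.z2, -d.p23, d.p13, -d.p12]

/-- The third differential of `Q` (a `6 × 2` matrix). -/
def q3 : Matrix (Fin 6) (Fin 2) R :=
  !![d.a11*d.l11 + d.a12*d.l12 + d.a13*d.l13, d.a11*d.l21 + d.a12*d.l22 + d.a13*d.l23 + d.z1;
     d.a21*d.l11 + d.a22*d.l12 + d.a23*d.l13 - d.z1, d.a21*d.l21 + d.a22*d.l22 + d.a23*d.l23;
     -d.a11*d.p23 + d.a12*d.p13 - d.a13*d.p12, -d.a21*d.p23 + d.a22*d.p13 - d.a23*d.p12;
     -d.l12*d.p12 - d.l13*d.p13 + d.z2*d.a11, -d.l22*d.p12 - d.l23*d.p13 + d.z2*d.a21;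
     d.l11*d.p12 - d.l13*d.p23 + d.z2*d.a12, d.l21*d.p12 - d.l23*d.p23 + d.z2*d.a22;
     d.l11*d.p13 + d.l12*d.p23 + d.z2*d.a13, d.l21*d.p13 + d.l22*d.p23 + d.z2*d.a23]

open Matrix

section Aux
open Pointwise
set_option linter.unusedSectionVars false
set_option maxHeartbeats 1600000
open Matrix

lemma aux_vec2_eta (u : Fin 2 → R) : ∃ a0 a1, u = ![a0, a1] :=
  ⟨u 0, u 1, by funext m; fin_cases m <;> rfl⟩

lemma aux_vec5_eta (u : Fin 5 → R) : ∃ a0 a1 a2 a3 a4, u = ![a0, a1, a2, a3, a4] :=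
  ⟨u 0, u 1, u 2, u 3, u 4, by funext m; fin_cases m <;> rfl⟩

lemma aux_vec6_eta (u : Fin 6 → R) : ∃ a0 a1 a2 a3 a4 a5, u = ![a0, a1, a2, a3, a4, a5] :=
  ⟨u 0, u 1, u 2, u 3, u 4, u 5, by funext m; fin_cases m <;> rfl⟩

lemma aux_q2q3 : ∀ s : Fin 2 → R, d.q2 *ᵥ (d.q3 *ᵥ s) = 0 := by
  intro s
  obtain ⟨s0, s1, rfl⟩ := aux_vec2_eta s
  simp only [QData.q1, QData.q2, QData.q3, QData.gen1, QData.gen2, QData.gen3, QData.gen4, QData.gen5, QData.E, QData.F, QData.dd, Matrix.cons_mulVec, Matrix.cons_dotProduct, Matrix.dotProduct_of_isEmpty, Matrix.empty_mulVec, Matrix.head_cons, Matrix.tail_cons, Matrix.smul_cons, Matrix.smul_empty, funext_iff, Fin.forall_fin_succ, Fin.forall_fin_zero_pi, IsEmpty.forall_iff, Pi.zero_apply, Matrix.cons_val_zero, Matrix.cons_val_one, Matrix.head_cons, Matrix.cons_val_succ, smul_eq_mul, add_zero, and_true]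
  refine ⟨?_, ?_, ?_, ?_, ?_⟩ <;> ring

lemma aux_q1q2 : ∀ t : Fin 6 → R, d.q1 *ᵥ (d.q2 *ᵥ t) = 0 := by
  intro t
  obtain ⟨t0, t1, t2, t3, t4, t5, rfl⟩ := aux_vec6_eta t
  simp only [QData.q1, QData.q2, QData.q3, QData.gen1, QData.gen2, QData.gen3, QData.gen4, QData.gen5, QData.E, QData.F, QData.dd, Matrix.cons_mulVec, Matrix.cons_dotProduct, Matrix.dotProduct_of_isEmpty, Matrix.empty_mulVec, Matrix.head_cons, Matrix.tail_cons, Matrix.smul_cons, Matrix.smul_empty, funext_iff, Fin.forall_fin_succ, Fin.forall_fin_zero_pi, IsEmpty.forall_iff, Pi.zero_apply, Matrix.cons_val_zero, Matrix.cons_val_one, Matrix.head_cons, Matrix.cons_val_succ, smul_eq_mul, add_zero, and_true]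
  ring


lemma aux_p1_1 (u : Fin 2 → R) (hu : d.q3 *ᵥ u = 0) : d.gen1 • u = 0 := by
  obtain ⟨u0, u1, rfl⟩ := aux_vec2_eta u
  simp only [QData.q1, QData.q2, QData.q3, QData.gen1, QData.gen2, QData.gen3, QData.gen4, QData.gen5, QData.E, QData.F, QData.dd, Matrix.cons_mulVec, Matrix.cons_dotProduct, Matrix.dotProduct_of_isEmpty, Matrix.empty_mulVec, Matrix.head_cons, Matrix.tail_cons, Matrix.smul_cons, Matrix.smul_empty, funext_iff, Fin.forall_fin_succ, Fin.forall_fin_zero_pi, IsEmpty.forall_iff, Pi.zero_apply, Matrix.cons_val_zero, Matrix.cons_val_one, Matrix.head_cons, Matrix.cons_val_succ, smul_eq_mul, add_zero, and_true] at hu ⊢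
  obtain ⟨h0, h1, h2, h3, h4, h5⟩ := hu
  refine ⟨?_, ?_⟩
  · linear_combination (d.z2) * h1 + (-d.l21) * h3 + (-d.l22) * h4 + (-d.l23) * h5
  · linear_combination (-d.z2) * h0 + (d.l11) * h3 + (d.l12) * h4 + (d.l13) * h5

lemma aux_p1_2 (u : Fin 2 → R) (hu : d.q3 *ᵥ u = 0) : d.gen2 • u = 0 := by
  obtain ⟨u0, u1, rfl⟩ := aux_vec2_eta u
  simp only [QData.q1, QData.q2, QData.q3, QData.gen1, QData.gen2, QData.gen3, QData.gen4, QData.gen5, QData.E, QData.F, QData.dd, Matrix.cons_mulVec, Matrix.cons_dotProduct, Matrix.dotProduct_of_isEmpty, Matrix.empty_mulVec, Matrix.head_cons, Matrix.tail_cons, Matrix.smul_cons, Matrix.smul_empty, funext_iff, Fin.forall_fin_succ, Fin.forall_fin_zero_pi, IsEmpty.forall_iff, Pi.zero_apply, Matrix.cons_val_zero, Matrix.cons_val_one, Matrix.head_cons, Matrix.cons_val_succ, smul_eq_mul, add_zero, and_true] at hu ⊢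
  obtain ⟨h0, h1, h2, h3, h4, h5⟩ := hu
  refine ⟨?_, ?_⟩
  · linear_combination (-d.p23) * h1 + (-d.l21) * h2 + (-d.a23) * h4 + (d.a22) * h5
  · linear_combination (d.p23) * h0 + (d.l11) * h2 + (d.a13) * h4 + (-d.a12) * h5

lemma aux_p1_3 (u : Fin 2 → R) (hu : d.q3 *ᵥ u = 0) : d.gen3 • u = 0 := by
  obtain ⟨u0, u1, rfl⟩ := aux_vec2_eta u
  simp only [QData.q1, QData.q2, QData.q3, QData.gen1, QData.gen2, QData.gen3, QData.gen4, QData.gen5, QData.E, QData.F, QData.dd, Matrix.cons_mulVec, Matrix.cons_dotProduct, Matrix.dotProduct_of_isEmpty, Matrix.empty_mulVec, Matrix.head_cons, Matrix.tail_cons, Matrix.smul_cons, Matrix.smul_empty, funext_iff, Fin.forall_fin_succ, Fin.forall_fin_zero_pi, IsEmpty.forall_iff, Pi.zero_apply, Matrix.cons_val_zero, Matrix.cons_val_one, Matrix.head_cons, Matrix.cons_val_succ, smul_eq_mul, add_zero, and_true] at hu ⊢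
  obtain ⟨h0, h1, h2, h3, h4, h5⟩ := hu
  refine ⟨?_, ?_⟩
  · linear_combination (d.p13) * h1 + (-d.l22) * h2 + (d.a23) * h3 + (-d.a21) * h5
  · linear_combination (-d.p13) * h0 + (d.l12) * h2 + (-d.a13) * h3 + (d.a11) * h5

lemma aux_p1_4 (u : Fin 2 → R) (hu : d.q3 *ᵥ u = 0) : d.gen4 • u = 0 := by
  obtain ⟨u0, u1, rfl⟩ := aux_vec2_eta u
  simp only [QData.q1, QData.q2, QData.q3, QData.gen1, QData.gen2, QData.gen3, QData.gen4, QData.gen5, QData.E, QData.F, QData.dd, Matrix.cons_mulVec, Matrix.cons_dotProduct, Matrix.dotProduct_of_isEmpty, Matrix.empty_mulVec, Matrix.head_cons, Matrix.tail_cons, Matrix.smul_cons, Matrix.smul_empty, funext_iff, Fin.forall_fin_succ, Fin.forall_fin_zero_pi, IsEmpty.forall_iff, Pi.zero_apply, Matrix.cons_val_zero, Matrix.cons_val_one, Matrix.head_cons, Matrix.cons_val_succ, smul_eq_mul, add_zero, and_true] at hu ⊢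
  obtain ⟨h0, h1, h2, h3, h4, h5⟩ := hu
  refine ⟨?_, ?_⟩
  · linear_combination (-d.p12) * h1 + (-d.l23) * h2 + (-d.a22) * h3 + (d.a21) * h4
  · linear_combination (d.p12) * h0 + (d.l13) * h2 + (d.a12) * h3 + (-d.a11) * h4

lemma aux_p1_5 (u : Fin 2 → R) (hu : d.q3 *ᵥ u = 0) : d.gen5 • u = 0 := by
  obtain ⟨u0, u1, rfl⟩ := aux_vec2_eta u
  simp only [QData.q1, QData.q2, QData.q3, QData.gen1, QData.gen2, QData.gen3, QData.gen4, QData.gen5, QData.E, QData.F, QData.dd, Matrix.cons_mulVec, Matrix.cons_dotProduct, Matrix.dotProduct_of_isEmpty, Matrix.empty_mulVec, Matrix.head_cons, Matrix.tail_cons, Matrix.smul_cons, Matrix.smul_empty, funext_iff, Fin.forall_fin_succ, Fin.forall_fin_zero_pi, IsEmpty.forall_iff, Pi.zero_apply, Matrix.cons_val_zero, Matrix.cons_val_one, Matrix.head_cons, Matrix.cons_val_succ, smul_eq_mul, add_zero, and_true] at hu ⊢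
  obtain ⟨h0, h1, h2, h3, h4, h5⟩ := hu
  refine ⟨?_, ?_⟩
  · linear_combination (-d.a23*d.l23 - d.a22*d.l22 - d.a21*d.l21) * h0 + (d.z1 + d.a13*d.l23 + d.a12*d.l22 + d.a11*d.l21) * h1
  · linear_combination (-d.z1 + d.a23*d.l13 + d.a22*d.l12 + d.a21*d.l11) * h0 + (-d.a13*d.l13 - d.a12*d.l12 - d.a11*d.l11) * h1

lemma aux_p2_1 (v : Fin 6 → R) (hv : d.q2 *ᵥ v = 0) :
    ∃ s : Fin 2 → R, d.gen1 • v = d.q3 *ᵥ s := by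
  obtain ⟨v0, v1, v2, v3, v4, v5, rfl⟩ := aux_vec6_eta v
  refine ⟨![(d.z2) * v1 + (-d.l21) * v3 + (-d.l22) * v4 + (-d.l23) * v5, (-d.z2) * v0 + (d.l11) * v3 + (d.l12) * v4 + (d.l13) * v5], ?_⟩
  simp only [QData.q1, QData.q2, QData.q3, QData.gen1, QData.gen2, QData.gen3, QData.gen4, QData.gen5, QData.E, QData.F, QData.dd, Matrix.cons_mulVec, Matrix.cons_dotProduct, Matrix.dotProduct_of_isEmpty, Matrix.empty_mulVec, Matrix.head_cons, Matrix.tail_cons, Matrix.smul_cons, Matrix.smul_empty, funext_iff, Fin.forall_fin_succ, Fin.forall_fin_zero_pi, IsEmpty.forall_iff, Pi.zero_apply, Matrix.cons_val_zero, Matrix.cons_val_one, Matrix.head_cons, Matrix.cons_val_succ, smul_eq_mul, add_zero, and_true] at hv ⊢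
  obtain ⟨h0, h1, h2, h3, h4⟩ := hv
  refine ⟨?_, ?_, ?_, ?_, ?_, ?_⟩
  · linear_combination (d.l11) * h1 + (d.l12) * h2 + (d.l13) * h3
  · linear_combination (d.l21) * h1 + (d.l22) * h2 + (d.l23) * h3
  · linear_combination (-d.p23) * h1 + (d.p13) * h2 + (-d.p12) * h3 + (d.z1 - d.a23*d.l13 - d.a22*d.l12 - d.a21*d.l11 + d.a13*d.l23 + d.a12*d.l22 + d.a11*d.l21) * h4
  · linear_combination (d.z2) * h1 + (-d.l13*d.l22 + d.l12*d.l23) * h4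
  · linear_combination (d.z2) * h2 + (d.l13*d.l21 - d.l11*d.l23) * h4
  · linear_combination (d.z2) * h3 + (-d.l12*d.l21 + d.l11*d.l22) * h4

lemma aux_p2_2 (v : Fin 6 → R) (hv : d.q2 *ᵥ v = 0) :
    ∃ s : Fin 2 → R, d.gen2 • v = d.q3 *ᵥ s := by
  obtain ⟨v0, v1, v2, v3, v4, v5, rfl⟩ := aux_vec6_eta v
  refine ⟨![(-d.p23) * v1 + (-d.l21) * v2 + (-d.a23) * v4 + (d.a22) * v5, (d.p23) * v0 + (d.l11) * v2 + (d.a13) * v4 + (-d.a12) * v5], ?_⟩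
  simp only [QData.q1, QData.q2, QData.q3, QData.gen1, QData.gen2, QData.gen3, QData.gen4, QData.gen5, QData.E, QData.F, QData.dd, Matrix.cons_mulVec, Matrix.cons_dotProduct, Matrix.dotProduct_of_isEmpty, Matrix.empty_mulVec, Matrix.head_cons, Matrix.tail_cons, Matrix.smul_cons, Matrix.smul_empty, funext_iff, Fin.forall_fin_succ, Fin.forall_fin_zero_pi, IsEmpty.forall_iff, Pi.zero_apply, Matrix.cons_val_zero, Matrix.cons_val_one, Matrix.head_cons, Matrix.cons_val_succ, smul_eq_mul, add_zero, and_true] at hv ⊢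
  obtain ⟨h0, h1, h2, h3, h4⟩ := hv
  refine ⟨?_, ?_, ?_, ?_, ?_, ?_⟩
  · linear_combination (-d.l11) * h0 + (d.a13) * h2 + (-d.a12) * h3
  · linear_combination (-d.l21) * h0 + (d.a23) * h2 + (-d.a22) * h3
  · linear_combination (d.p23) * h0 + (-d.a13*d.a22 + d.a12*d.a23) * h4
  · linear_combination (-d.z2) * h0 + (-d.p13) * h2 + (d.p12) * h3 + (-d.z1 + d.a21*d.l11 - d.a11*d.l21) * h4
  · linear_combination (-d.p23) * h2 + (d.a22*d.l11 - d.a12*d.l21) * h4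
  · linear_combination (-d.p23) * h3 + (d.a23*d.l11 - d.a13*d.l21) * h4

lemma aux_p2_3 (v : Fin 6 → R) (hv : d.q2 *ᵥ v = 0) :
    ∃ s : Fin 2 → R, d.gen3 • v = d.q3 *ᵥ s := by
  obtain ⟨v0, v1, v2, v3, v4, v5, rfl⟩ := aux_vec6_eta v
  refine ⟨![(d.p13) * v1 + (-d.l22) * v2 + (d.a23) * v3 + (-d.a21) * v5, (-d.p13) * v0 + (d.l12) * v2 + (-d.a13) * v3 + (d.a11) * v5], ?_⟩
  simp only [QData.q1, QData.q2, QData.q3, QData.gen1, QData.gen2, QData.gen3, QData.gen4, QData.gen5, QData.E, QData.F, QData.dd, Matrix.cons_mulVec, Matrix.cons_dotProduct, Matrix.dotProduct_of_isEmpty, Matrix.empty_mulVec, Matrix.head_cons, Matrix.tail_cons, Matrix.smul_cons, Matrix.smul_empty, funext_iff, Fin.forall_fin_succ, Fin.forall_fin_zero_pi, IsEmpty.forall_iff, Pi.zero_apply, Matrix.cons_val_zero, Matrix.cons_val_one, Matrix.head_cons, Matrix.cons_val_succ, smul_eq_mul, add_zero, and_true] at hv ⊢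
  obtain ⟨h0, h1, h2, h3, h4⟩ := hv
  refine ⟨?_, ?_, ?_, ?_, ?_, ?_⟩
  · linear_combination (-d.l12) * h0 + (-d.a13) * h1 + (d.a11) * h3
  · linear_combination (-d.l22) * h0 + (-d.a23) * h1 + (d.a21) * h3
  · linear_combination (-d.p13) * h0 + (d.a13*d.a21 - d.a11*d.a23) * h4
  · linear_combination (d.p13) * h1 + (d.a21*d.l12 - d.a11*d.l22) * h4
  · linear_combination (-d.z2) * h0 + (d.p23) * h1 + (d.p12) * h3 + (-d.z1 + d.a22*d.l12 - d.a12*d.l22) * h4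
  · linear_combination (d.p13) * h3 + (d.a23*d.l12 - d.a13*d.l22) * h4

lemma aux_p2_4 (v : Fin 6 → R) (hv : d.q2 *ᵥ v = 0) :
    ∃ s : Fin 2 → R, d.gen4 • v = d.q3 *ᵥ s := by
  obtain ⟨v0, v1, v2, v3, v4, v5, rfl⟩ := aux_vec6_eta v
  refine ⟨![(-d.p12) * v1 + (-d.l23) * v2 + (-d.a22) * v3 + (d.a21) * v4, (d.p12) * v0 + (d.l13) * v2 + (d.a12) * v3 + (-d.a11) * v4], ?_⟩
  simp only [QData.q1, QData.q2, QData.q3, QData.gen1, QData.gen2, QData.gen3, QData.gen4, QData.gen5, QData.E, QData.F, QData.dd, Matrix.cons_mulVec, Matrix.cons_dotProduct, Matrix.dotProduct_of_isEmpty, Matrix.empty_mulVec, Matrix.head_cons, Matrix.tail_cons, Matrix.smul_cons, Matrix.smul_empty, funext_iff, Fin.forall_fin_succ, Fin.forall_fin_zero_pi, IsEmpty.forall_iff, Pi.zero_apply, Matrix.cons_val_zero, Matrix.cons_val_one, Matrix.head_cons, Matrix.cons_val_succ, smul_eq_mul, add_zero, and_true] at hv ⊢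
  obtain ⟨h0, h1, h2, h3, h4⟩ := hv
  refine ⟨?_, ?_, ?_, ?_, ?_, ?_⟩
  · linear_combination (-d.l13) * h0 + (d.a12) * h1 + (-d.a11) * h2
  · linear_combination (-d.l23) * h0 + (d.a22) * h1 + (-d.a21) * h2
  · linear_combination (d.p12) * h0 + (-d.a12*d.a21 + d.a11*d.a22) * h4
  · linear_combination (-d.p12) * h1 + (d.a21*d.l13 - d.a11*d.l23) * h4
  · linear_combination (-d.p12) * h2 + (d.a22*d.l13 - d.a12*d.l23) * h4
  · linear_combination (-d.z2) * h0 + (d.p23) * h1 + (-d.p13) * h2 + (-d.z1 + d.a23*d.l13 - d.a13*d.l23) * h4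

lemma aux_p2_5 (v : Fin 6 → R) (hv : d.q2 *ᵥ v = 0) :
    ∃ s : Fin 2 → R, d.gen5 • v = d.q3 *ᵥ s := by
  obtain ⟨v0, v1, v2, v3, v4, v5, rfl⟩ := aux_vec6_eta v
  refine ⟨![(-d.a23*d.l23 - d.a22*d.l22 - d.a21*d.l21) * v0 + (d.z1 + d.a13*d.l23 + d.a12*d.l22 + d.a11*d.l21) * v1, (-d.z1 + d.a23*d.l13 + d.a22*d.l12 + d.a21*d.l11) * v0 + (-d.a13*d.l13 - d.a12*d.l12 - d.a11*d.l11) * v1], ?_⟩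
  simp only [QData.q1, QData.q2, QData.q3, QData.gen1, QData.gen2, QData.gen3, QData.gen4, QData.gen5, QData.E, QData.F, QData.dd, Matrix.cons_mulVec, Matrix.cons_dotProduct, Matrix.dotProduct_of_isEmpty, Matrix.empty_mulVec, Matrix.head_cons, Matrix.tail_cons, Matrix.smul_cons, Matrix.smul_empty, funext_iff, Fin.forall_fin_succ, Fin.forall_fin_zero_pi, IsEmpty.forall_iff, Pi.zero_apply, Matrix.cons_val_zero, Matrix.cons_val_one, Matrix.head_cons, Matrix.cons_val_succ, smul_eq_mul, add_zero, and_true] at hv ⊢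
  obtain ⟨h0, h1, h2, h3, h4⟩ := hv
  refine ⟨?_, ?_, ?_, ?_, ?_, ?_⟩
  · linear_combination (0:R) * h0
  · linear_combination (0:R) * h0
  · linear_combination (-d.z1 + d.a23*d.l13 + d.a22*d.l12 + d.a21*d.l11 - d.a13*d.l23 - d.a12*d.l22 - d.a11*d.l21) * h0 + (d.a13*d.a22 - d.a12*d.a23) * h1 + (-d.a13*d.a21 + d.a11*d.a23) * h2 + (d.a12*d.a21 - d.a11*d.a22) * h3
  · linear_combination (d.l13*d.l22 - d.l12*d.l23) * h0 + (d.z1 - d.a21*d.l11 + d.a11*d.l21) * h1 + (-d.a21*d.l12 + d.a11*d.l22) * h2 + (-d.a21*d.l13 + d.a11*d.l23) * h3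
  · linear_combination (-d.l13*d.l21 + d.l11*d.l23) * h0 + (-d.a22*d.l11 + d.a12*d.l21) * h1 + (d.z1 - d.a22*d.l12 + d.a12*d.l22) * h2 + (-d.a22*d.l13 + d.a12*d.l23) * h3
  · linear_combination (d.l12*d.l21 - d.l11*d.l22) * h0 + (-d.a23*d.l11 + d.a13*d.l21) * h1 + (-d.a23*d.l12 + d.a13*d.l22) * h2 + (d.z1 - d.a23*d.l13 + d.a13*d.l23) * h3

lemma aux_p3_1 (w : Fin 5 → R) (hw : d.q1 *ᵥ w = 0) :
    ∃ t : Fin 6 → R, d.gen1 • w = d.q2 *ᵥ t := by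
  obtain ⟨w0, w1, w2, w3, w4, rfl⟩ := aux_vec5_eta w
  refine ⟨![(d.l11) * w1 + (d.l12) * w2 + (d.l13) * w3, (d.l21) * w1 + (d.l22) * w2 + (d.l23) * w3, (-d.p23) * w1 + (d.p13) * w2 + (-d.p12) * w3 + (d.z1 - d.a23*d.l13 - d.a22*d.l12 - d.a21*d.l11 + d.a13*d.l23 + d.a12*d.l22 + d.a11*d.l21) * w4, (d.z2) * w1 + (-d.l13*d.l22 + d.l12*d.l23) * w4, (d.z2) * w2 + (d.l13*d.l21 - d.l11*d.l23) * w4, (d.z2) * w3 + (-d.l12*d.l21 + d.l11*d.l22) * w4], ?_⟩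
  simp only [QData.q1, QData.q2, QData.q3, QData.gen1, QData.gen2, QData.gen3, QData.gen4, QData.gen5, QData.E, QData.F, QData.dd, Matrix.cons_mulVec, Matrix.cons_dotProduct, Matrix.dotProduct_of_isEmpty, Matrix.empty_mulVec, Matrix.head_cons, Matrix.tail_cons, Matrix.smul_cons, Matrix.smul_empty, funext_iff, Fin.forall_fin_succ, Fin.forall_fin_zero_pi, IsEmpty.forall_iff, Pi.zero_apply, Matrix.cons_val_zero, Matrix.cons_val_one, Matrix.head_cons, Matrix.cons_val_succ, smul_eq_mul, add_zero, and_true] at hw ⊢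
  refine ⟨?_, ?_, ?_, ?_, ?_⟩
  · linear_combination hw
  · linear_combination (0:R) * hw
  · linear_combination (0:R) * hw
  · linear_combination (0:R) * hw
  · linear_combination (0:R) * hw

lemma aux_p3_2 (w : Fin 5 → R) (hw : d.q1 *ᵥ w = 0) :
    ∃ t : Fin 6 → R, d.gen2 • w = d.q2 *ᵥ t := by
  obtain ⟨w0, w1, w2, w3, w4, rfl⟩ := aux_vec5_eta w
  refine ⟨![(-d.l11) * w0 + (d.a13) * w2 + (-d.a12) * w3, (-d.l21) * w0 + (d.a23) * w2 + (-d.a22) * w3, (d.p23) * w0 + (-d.a13*d.a22 + d.a12*d.a23) * w4, (-d.z2) * w0 + (-d.p13) * w2 + (d.p12) * w3 + (-d.z1 + d.a21*d.l11 - d.a11*d.l21) * w4, (-d.p23) * w2 + (d.a22*d.l11 - d.a12*d.l21) * w4, (-d.p23) * w3 + (d.a23*d.l11 - d.a13*d.l21) * w4], ?_⟩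
  simp only [QData.q1, QData.q2, QData.q3, QData.gen1, QData.gen2, QData.gen3, QData.gen4, QData.gen5, QData.E, QData.F, QData.dd, Matrix.cons_mulVec, Matrix.cons_dotProduct, Matrix.dotProduct_of_isEmpty, Matrix.empty_mulVec, Matrix.head_cons, Matrix.tail_cons, Matrix.smul_cons, Matrix.smul_empty, funext_iff, Fin.forall_fin_succ, Fin.forall_fin_zero_pi, IsEmpty.forall_iff, Pi.zero_apply, Matrix.cons_val_zero, Matrix.cons_val_one, Matrix.head_cons, Matrix.cons_val_succ, smul_eq_mul, add_zero, and_true] at hw ⊢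
  refine ⟨?_, ?_, ?_, ?_, ?_⟩
  · linear_combination (0:R) * hw
  · linear_combination hw
  · linear_combination (0:R) * hw
  · linear_combination (0:R) * hw
  · linear_combination (0:R) * hw

lemma aux_p3_3 (w : Fin 5 → R) (hw : d.q1 *ᵥ w = 0) :
    ∃ t : Fin 6 → R, d.gen3 • w = d.q2 *ᵥ t := by
  obtain ⟨w0, w1, w2, w3, w4, rfl⟩ := aux_vec5_eta w
  refine ⟨![(-d.l12) * w0 + (-d.a13) * w1 + (d.a11) * w3, (-d.l22) * w0 + (-d.a23) * w1 + (d.a21) * w3, (-d.p13) * w0 + (d.a13*d.a21 - d.a11*d.a23) * w4, (d.p13) * w1 + (d.a21*d.l12 - d.a11*d.l22) * w4, (-d.z2) * w0 + (d.p23) * w1 + (d.p12) * w3 + (-d.z1 + d.a22*d.l12 - d.a12*d.l22) * w4, (d.p13) * w3 + (d.a23*d.l12 - d.a13*d.l22) * w4], ?_⟩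
  simp only [QData.q1, QData.q2, QData.q3, QData.gen1, QData.gen2, QData.gen3, QData.gen4, QData.gen5, QData.E, QData.F, QData.dd, Matrix.cons_mulVec, Matrix.cons_dotProduct, Matrix.dotProduct_of_isEmpty, Matrix.empty_mulVec, Matrix.head_cons, Matrix.tail_cons, Matrix.smul_cons, Matrix.smul_empty, funext_iff, Fin.forall_fin_succ, Fin.forall_fin_zero_pi, IsEmpty.forall_iff, Pi.zero_apply, Matrix.cons_val_zero, Matrix.cons_val_one, Matrix.head_cons, Matrix.cons_val_succ, smul_eq_mul, add_zero, and_true] at hw ⊢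
  refine ⟨?_, ?_, ?_, ?_, ?_⟩
  · linear_combination (0:R) * hw
  · linear_combination (0:R) * hw
  · linear_combination hw
  · linear_combination (0:R) * hw
  · linear_combination (0:R) * hw

lemma aux_p3_4 (w : Fin 5 → R) (hw : d.q1 *ᵥ w = 0) :
    ∃ t : Fin 6 → R, d.gen4 • w = d.q2 *ᵥ t := by
  obtain ⟨w0, w1, w2, w3, w4, rfl⟩ := aux_vec5_eta w
  refine ⟨![(-d.l13) * w0 + (d.a12) * w1 + (-d.a11) * w2, (-d.l23) * w0 + (d.a22) * w1 + (-d.a21) * w2, (d.p12) * w0 + (-d.a12*d.a21 + d.a11*d.a22) * w4, (-d.p12) * w1 + (d.a21*d.l13 - d.a11*d.l23) * w4, (-d.p12) * w2 + (d.a22*d.l13 - d.a12*d.l23) * w4, (-d.z2) * w0 + (d.p23) * w1 + (-d.p13) * w2 + (-d.z1 + d.a23*d.l13 - d.a13*d.l23) * w4], ?_⟩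
  simp only [QData.q1, QData.q2, QData.q3, QData.gen1, QData.gen2, QData.gen3, QData.gen4, QData.gen5, QData.E, QData.F, QData.dd, Matrix.cons_mulVec, Matrix.cons_dotProduct, Matrix.dotProduct_of_isEmpty, Matrix.empty_mulVec, Matrix.head_cons, Matrix.tail_cons, Matrix.smul_cons, Matrix.smul_empty, funext_iff, Fin.forall_fin_succ, Fin.forall_fin_zero_pi, IsEmpty.forall_iff, Pi.zero_apply, Matrix.cons_val_zero, Matrix.cons_val_one, Matrix.head_cons, Matrix.cons_val_succ, smul_eq_mul, add_zero, and_true] at hw ⊢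
  refine ⟨?_, ?_, ?_, ?_, ?_⟩
  · linear_combination (0:R) * hw
  · linear_combination (0:R) * hw
  · linear_combination (0:R) * hw
  · linear_combination hw
  · linear_combination (0:R) * hw

lemma aux_p3_5 (w : Fin 5 → R) (hw : d.q1 *ᵥ w = 0) :
    ∃ t : Fin 6 → R, d.gen5 • w = d.q2 *ᵥ t := by
  obtain ⟨w0, w1, w2, w3, w4, rfl⟩ := aux_vec5_eta w
  refine ⟨![(0:R), (0:R), (-d.z1 + d.a23*d.l13 + d.a22*d.l12 + d.a21*d.l11 - d.a13*d.l23 - d.a12*d.l22 - d.a11*d.l21) * w0 + (d.a13*d.a22 - d.a12*d.a23) * w1 + (-d.a13*d.a21 + d.a11*d.a23) * w2 + (d.a12*d.a21 - d.a11*d.a22) * w3, (d.l13*d.l22 - d.l12*d.l23) * w0 + (d.z1 - d.a21*d.l11 + d.a11*d.l21) * w1 + (-d.a21*d.l12 + d.a11*d.l22) * w2 + (-d.a21*d.l13 + d.a11*d.l23) * w3, (-d.l13*d.l21 + d.l11*d.l23) * w0 + (-d.a22*d.l11 + d.a12*d.l21) * w1 + (d.z1 - d.a22*d.l12 + d.a12*d.l22)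 * w2 + (-d.a22*d.l13 + d.a12*d.l23) * w3, (d.l12*d.l21 - d.l11*d.l22) * w0 + (-d.a23*d.l11 + d.a13*d.l21) * w1 + (-d.a23*d.l12 + d.a13*d.l22) * w2 + (d.z1 - d.a23*d.l13 + d.a13*d.l23) * w3], ?_⟩
  simp only [QData.q1, QData.q2, QData.q3, QData.gen1, QData.gen2, QData.gen3, QData.gen4, QData.gen5, QData.E, QData.F, QData.dd, Matrix.cons_mulVec, Matrix.cons_dotProduct, Matrix.dotProduct_of_isEmpty, Matrix.empty_mulVec, Matrix.head_cons, Matrix.tail_cons, Matrix.smul_cons, Matrix.smul_empty, funext_iff, Fin.forall_fin_succ, Fin.forall_fin_zero_pi, IsEmpty.forall_iff, Pi.zero_apply, Matrix.cons_val_zero, Matrix.cons_val_one, Matrix.head_cons, Matrix.cons_val_succ, smul_eq_mul, add_zero, and_true] at hw ⊢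
  refine ⟨?_, ?_, ?_, ?_, ?_⟩
  · linear_combination (0:R) * hw
  · linear_combination (0:R) * hw
  · linear_combination (0:R) * hw
  · linear_combination (0:R) * hw
  · linear_combination hw

lemma aux_key1 {x : R} (hx : x ∈ Ideal.span {d.gen1, d.gen2, d.gen3, d.gen4, d.gen5}) :
    ∀ u : Fin 2 → R, d.q3 *ᵥ u = 0 → x • u = 0 := by
  refine Submodule.span_induction (fun g hg => ?_) (fun u _ => zero_smul R u)
    (fun a b _ _ ha hb u hu => by rw [add_smul, ha u hu, hb u hu, add_zero])
    (fun r a _ ha u hu => by rw [smul_eq_mul, mul_smul, ha u hu, smul_zero]) hx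
  simp only [Set.mem_insert_iff, Set.mem_singleton_iff] at hg
  rcases hg with rfl | rfl | rfl | rfl | rfl
  exacts [d.aux_p1_1, d.aux_p1_2, d.aux_p1_3, d.aux_p1_4, d.aux_p1_5]

lemma aux_key2 {x : R} (hx : x ∈ Ideal.span {d.gen1, d.gen2, d.gen3, d.gen4, d.gen5}) :
    ∀ v : Fin 6 → R, d.q2 *ᵥ v = 0 → ∃ s : Fin 2 → R, x • v = d.q3 *ᵥ s := by
  refine Submodule.span_induction (fun g hg => ?_)
    (fun v _ => ⟨0, by rw [zero_smul, Matrix.mulVec_zero]⟩)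
    (fun a b _ _ ha hb v hv => ?_) (fun r a _ ha v hv => ?_) hx
  · simp only [Set.mem_insert_iff, Set.mem_singleton_iff] at hg
    rcases hg with rfl | rfl | rfl | rfl | rfl
    exacts [d.aux_p2_1, d.aux_p2_2, d.aux_p2_3, d.aux_p2_4, d.aux_p2_5]
  · obtain ⟨s, hs⟩ := ha v hv
    obtain ⟨t, ht⟩ := hb v hv
    exact ⟨s + t, by rw [add_smul, hs, ht, Matrix.mulVec_add]⟩
  · obtain ⟨s, hs⟩ := ha v hv
    exact ⟨r • s, by rw [smul_eq_mul, mul_smul, hs, Matrix.mulVec_smul]⟩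

lemma aux_key3 {x : R} (hx : x ∈ Ideal.span {d.gen1, d.gen2, d.gen3, d.gen4, d.gen5}) :
    ∀ w : Fin 5 → R, d.q1 *ᵥ w = 0 → ∃ t : Fin 6 → R, x • w = d.q2 *ᵥ t := by
  refine Submodule.span_induction (fun g hg => ?_)
    (fun w _ => ⟨0, by rw [zero_smul, Matrix.mulVec_zero]⟩)
    (fun a b _ _ ha hb w hw => ?_) (fun r a _ ha w hw => ?_) hx
  · simp only [Set.mem_insert_iff, Set.mem_singleton_iff] at hg
    rcases hg with rfl | rfl | rfl | rfl | rfl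
    exacts [d.aux_p3_1, d.aux_p3_2, d.aux_p3_3, d.aux_p3_4, d.aux_p3_5]
  · obtain ⟨s, hs⟩ := ha w hw
    obtain ⟨t, ht⟩ := hb w hw
    exact ⟨s + t, by rw [add_smul, hs, ht, Matrix.mulVec_add]⟩
  · obtain ⟨s, hs⟩ := ha w hw
    exact ⟨r • s, by rw [smul_eq_mul, mul_smul, hs, Matrix.mulVec_smul]⟩

lemma aux_mem_smul_top {M : Type*} [AddCommGroup M] [Module R M] {x : R} {m : M} :
    m ∈ x • (⊤ : Submodule R M) ↔ ∃ n, x • n = m := by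
  rw [← SetLike.mem_coe, Submodule.coe_pointwise_smul]
  constructor
  · rintro ⟨n, -, rfl⟩
    exact ⟨n, rfl⟩
  · rintro ⟨n, rfl⟩
    exact ⟨n, trivial, rfl⟩

end Aux

end QData
/-- Theorem: if the ideal generated by the five entries of `q1` contains a regular
sequence of length three, then the complex `Q` is acyclic. -/
theorem Q_acyclic {R : Type*} [CommRing R] [IsNoetherianRing R] (d : QData R)
    (hgrade : ∃ rs : List R, rs.length = 3 ∧
      (∀ x ∈ rs, x ∈ Ideal.span {d.gen1, d.gen2, d.gen3, d.gen4, d.gen5}) ∧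
      RingTheory.Sequence.IsRegular R rs) :
    Function.Injective d.q3.mulVecLin ∧
    LinearMap.ker d.q2.mulVecLin = LinearMap.range d.q3.mulVecLin ∧
    LinearMap.ker d.q1.mulVecLin = LinearMap.range d.q2.mulVecLin := by
  obtain ⟨rs, hlen, hmem, hreg⟩ := hgrade
  obtain ⟨x, y, z, rfl⟩ : ∃ x y z, rs = [x, y, z] := by
    rcases rs with _ | ⟨x, _ | ⟨y, _ | ⟨z, _ | ⟨w, t⟩⟩⟩⟩ <;> simp at hlen
    exact ⟨x, y, z, rfl⟩
  have hxI := hmem x (by simp)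
  have hyI := hmem y (by simp)
  have hzI := hmem z (by simp)
  have hwr := hreg.toIsWeaklyRegular
  rw [RingTheory.Sequence.isWeaklyRegular_cons_iff] at hwr
  obtain ⟨hxr, hwr⟩ := hwr
  rw [RingTheory.Sequence.isWeaklyRegular_cons_iff] at hwr
  obtain ⟨hyr, hwr⟩ := hwr
  rw [RingTheory.Sequence.isWeaklyRegular_cons_iff] at hwr
  obtain ⟨hzr, -⟩ := hwr
  -- scalar consequences of regularity
  have hx0 : ∀ r : R, x * r = 0 → r = 0 := by
    intro r h
    exact hxr (show x • r = x • 0 by simp [smul_eq_mul, h])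
  have hy0 : ∀ r : R, y * r ∈ Ideal.span {x} → r ∈ Ideal.span {x} := by
    intro r h
    have h1 : (Submodule.Quotient.mk (y * r) : QuotSMulTop x R) = 0 := by
      rw [Submodule.Quotient.mk_eq_zero]
      obtain ⟨c, hc⟩ := Ideal.mem_span_singleton'.mp h
      exact QData.aux_mem_smul_top.mpr ⟨c, by rw [smul_eq_mul, mul_comm]; exact hc⟩
    have h2 : y • (Submodule.Quotient.mk r : QuotSMulTop x R) = y • 0 := by
      rw [smul_zero, ← Submodule.Quotient.mk_smul, smul_eq_mul]
      exact h1
    have h3 := hyr h2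
    rw [Submodule.Quotient.mk_eq_zero] at h3
    obtain ⟨c, hc⟩ := QData.aux_mem_smul_top.mp h3
    exact Ideal.mem_span_singleton'.mpr ⟨c, by rw [mul_comm, ← smul_eq_mul, hc]⟩
  have hz0 : ∀ r : R, z * r ∈ Ideal.span ({x, y} : Set R) → r ∈ Ideal.span ({x, y} : Set R) := by
    intro r h
    obtain ⟨c, e, hce⟩ := Ideal.mem_span_pair.mp h
    have h2 : (Submodule.Quotient.mk (z * r) : QuotSMulTop x R) = y • Submodule.Quotient.mk e := by
      rw [show z * r = c * x + y * e from by linear_combination -hce]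
      rw [Submodule.Quotient.mk_add]
      rw [show (Submodule.Quotient.mk (c * x) : QuotSMulTop x R) = 0 from
        (Submodule.Quotient.mk_eq_zero _).mpr (QData.aux_mem_smul_top.mpr ⟨c, by rw [smul_eq_mul]; ring⟩)]
      rw [zero_add, ← Submodule.Quotient.mk_smul, smul_eq_mul]
    have h1 : (Submodule.Quotient.mk (Submodule.Quotient.mk (z * r)) :
        QuotSMulTop y (QuotSMulTop x R)) = 0 := by
      rw [Submodule.Quotient.mk_eq_zero]
      exact QData.aux_mem_smul_top.mpr ⟨Submodule.Quotient.mk e, h2.symm⟩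
    have h3 : z • (Submodule.Quotient.mk (Submodule.Quotient.mk r) :
        QuotSMulTop y (QuotSMulTop x R)) = z • 0 := by
      rw [smul_zero, ← Submodule.Quotient.mk_smul, ← Submodule.Quotient.mk_smul, smul_eq_mul]
      exact h1
    have h4 := hzr h3
    rw [Submodule.Quotient.mk_eq_zero] at h4
    obtain ⟨s, hs⟩ := QData.aux_mem_smul_top.mp h4
    obtain ⟨e', rfl⟩ := Submodule.Quotient.mk_surjective _ s
    rw [← Submodule.Quotient.mk_smul, Submodule.Quotient.eq] at hs
    obtain ⟨c', hc'⟩ := QData.aux_mem_smul_top.mp hs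
    refine Ideal.mem_span_pair.mpr ⟨-c', e', ?_⟩
    rw [smul_eq_mul, smul_eq_mul] at hc'
    linear_combination -hc'
  -- injectivity of q3
  have hker3 : ∀ u : Fin 2 → R, d.q3.mulVec u = 0 → u = 0 := by
    intro u hu
    have h := d.aux_key1 hxI u hu
    funext j
    have hj := congrFun h j
    simp only [Pi.smul_apply, smul_eq_mul, Pi.zero_apply] at hj
    simpa using hx0 _ hj
  have inj : Function.Injective d.q3.mulVecLin := by
    intro a b hab
    have h : d.q3.mulVec (a - b) = 0 := by
      rw [← Matrix.mulVecLin_apply, map_sub, hab, sub_self]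
    exact sub_eq_zero.mp (hker3 _ h)
  have part2 : LinearMap.ker d.q2.mulVecLin = LinearMap.range d.q3.mulVecLin := by
    apply le_antisymm
    · intro v hv
      rw [LinearMap.mem_ker, Matrix.mulVecLin_apply] at hv
      obtain ⟨α, hα⟩ := d.aux_key2 hxI v hv
      obtain ⟨β, hβ⟩ := d.aux_key2 hyI v hv
      have h0 : d.q3.mulVec (y • α - x • β) = 0 := by
        rw [← Matrix.mulVecLin_apply, map_sub, map_smul, map_smul, Matrix.mulVecLin_apply,
          Matrix.mulVecLin_apply, ← hα, ← hβ, smul_comm y x v, sub_self]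
      have h2 : y • α = x • β := sub_eq_zero.mp (hker3 _ h0)
      have h3 : ∀ j, ∃ c, α j = x * c := by
        intro j
        have hj : y * α j = x * β j := by
          have := congrFun h2 j
          simpa only [Pi.smul_apply, smul_eq_mul] using this
        have hmemj : y * α j ∈ Ideal.span {x} := by
          rw [hj]
          exact Ideal.mem_span_singleton'.mpr ⟨β j, mul_comm _ _⟩
        obtain ⟨c, hc⟩ := Ideal.mem_span_singleton'.mp (hy0 _ hmemj)
        exact ⟨c, by rw [← hc, mul_comm]⟩
      choose γ hγ using h3
      have hαγ : α = x • γ := funext fun j => by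
        rw [Pi.smul_apply, smul_eq_mul]; exact hγ j
      refine ⟨γ, ?_⟩
      have h4 : x • (d.q3.mulVec γ) = x • v := by
        rw [← Matrix.mulVec_smul, ← hαγ, ← hα]
      funext j
      have hj := congrFun h4 j
      simp only [Pi.smul_apply, smul_eq_mul] at hj
      have h5 := hx0 _ (show x * ((d.q3.mulVec γ) j - v j) = 0 by rw [mul_sub, hj, sub_self])
      rw [Matrix.mulVecLin_apply]
      exact sub_eq_zero.mp h5
    · rintro v ⟨s, rfl⟩
      rw [LinearMap.mem_ker]
      simp only [Matrix.mulVecLin_apply]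
      exact d.aux_q2q3 s
  have part3 : LinearMap.ker d.q1.mulVecLin = LinearMap.range d.q2.mulVecLin := by
    apply le_antisymm
    · intro w hw
      rw [LinearMap.mem_ker, Matrix.mulVecLin_apply] at hw
      obtain ⟨a, ha⟩ := d.aux_key3 hxI w hw
      obtain ⟨b, hb⟩ := d.aux_key3 hyI w hw
      obtain ⟨c, hc⟩ := d.aux_key3 hzI w hw
      have hab : d.q2.mulVec (y • a - x • b) = 0 := by
        rw [← Matrix.mulVecLin_apply, map_sub, map_smul, map_smul, Matrix.mulVecLin_apply,
          Matrix.mulVecLin_apply, ← ha, ← hb, smul_comm y x w, sub_self]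
      have hac : d.q2.mulVec (z • a - x • c) = 0 := by
        rw [← Matrix.mulVecLin_apply, map_sub, map_smul, map_smul, Matrix.mulVecLin_apply,
          Matrix.mulVecLin_apply, ← ha, ← hc, smul_comm z x w, sub_self]
      have hbc : d.q2.mulVec (z • b - y • c) = 0 := by
        rw [← Matrix.mulVecLin_apply, map_sub, map_smul, map_smul, Matrix.mulVecLin_apply,
          Matrix.mulVecLin_apply, ← hb, ← hc, smul_comm z y w, sub_self]
      have hrange : ∀ v : Fin 6 → R, d.q2.mulVec v = 0 → ∃ W, v = d.q3.mulVec W := by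
        intro v hv
        have hmem2 : v ∈ LinearMap.range d.q3.mulVecLin := by
          rw [← part2, LinearMap.mem_ker, Matrix.mulVecLin_apply]
          exact hv
        obtain ⟨W, hW⟩ := hmem2
        exact ⟨W, by rw [← hW, Matrix.mulVecLin_apply]⟩
      obtain ⟨W, hWeq⟩ := hrange _ hab
      obtain ⟨W', hW'eq⟩ := hrange _ hac
      obtain ⟨W'', hW''eq⟩ := hrange _ hbc
      have hkos : d.q3.mulVec (y • W' - z • W - x • W'') = 0 := by
        rw [← Matrix.mulVecLin_apply, map_sub, map_sub, map_smul, map_smul, map_smul]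
        simp only [Matrix.mulVecLin_apply]
        rw [← hWeq, ← hW'eq, ← hW''eq]
        funext j
        simp only [Pi.sub_apply, Pi.smul_apply, smul_eq_mul, Pi.zero_apply]
        ring
      have h5 := hker3 _ hkos
      have h6 : ∀ j, W j ∈ Ideal.span ({x, y} : Set R) := by
        intro j
        have hj : z * W j = y * W' j - x * W'' j := by
          have := congrFun h5 j
          simp only [Pi.sub_apply, Pi.smul_apply, smul_eq_mul, Pi.zero_apply] at this
          linear_combination -this
        apply hz0
        rw [hj]
        exact Ideal.mem_span_pair.mpr ⟨-(W'' j), W' j, by ring⟩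
      have h7 : ∀ j, ∃ sj tj, W j = x * sj + y * tj := by
        intro j
        obtain ⟨aj, bj, hj⟩ := Ideal.mem_span_pair.mp (h6 j)
        exact ⟨aj, bj, by linear_combination -hj⟩
      choose sv tv hst using h7
      have hWv : W = x • sv + y • tv := funext fun j => by
        simp only [Pi.add_apply, Pi.smul_apply, smul_eq_mul]; exact hst j
      have h8 : y • (a - d.q3.mulVec tv) = x • (b + d.q3.mulVec sv) := by
        funext j
        have h9 := congrFun hWeq j
        have h10 : (d.q3.mulVec W) j = x * (d.q3.mulVec sv) j + y * (d.q3.mulVec tv) j := by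
          rw [hWv, show d.q3.mulVec (x • sv + y • tv) = x • (d.q3.mulVec sv) + y • (d.q3.mulVec tv) from
            by rw [Matrix.mulVec_add, Matrix.mulVec_smul, Matrix.mulVec_smul]]
          simp only [Pi.add_apply, Pi.smul_apply, smul_eq_mul]
        simp only [Pi.smul_apply, Pi.sub_apply, Pi.add_apply, smul_eq_mul] at h9 ⊢
        linear_combination h9 + h10
      have h11 : ∀ m, ∃ um, a m - (d.q3.mulVec tv) m = x * um := by
        intro m
        have hm := congrFun h8 m
        simp only [Pi.smul_apply, Pi.sub_apply, Pi.add_apply, smul_eq_mul] at hm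
        have hmm : y * (a m - (d.q3.mulVec tv) m) ∈ Ideal.span {x} := by
          rw [hm]
          exact Ideal.mem_span_singleton'.mpr ⟨b m + (d.q3.mulVec sv) m, mul_comm _ _⟩
        obtain ⟨c1, hc1⟩ := Ideal.mem_span_singleton'.mp (hy0 _ hmm)
        exact ⟨c1, by rw [← hc1, mul_comm]⟩
      choose uv huv using h11
      have hav : x • uv = a - d.q3.mulVec tv := funext fun m => by
        simp only [Pi.sub_apply, Pi.smul_apply, smul_eq_mul]
        linear_combination -huv m
      refine ⟨uv, ?_⟩
      have h12 : x • (d.q2.mulVec uv) = x • w := by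
        rw [← Matrix.mulVec_smul, hav, Matrix.mulVec_sub, d.aux_q2q3 tv, sub_zero, ← ha]
      funext m
      have hm := congrFun h12 m
      simp only [Pi.smul_apply, smul_eq_mul] at hm
      have h13 := hx0 _ (show x * ((d.q2.mulVec uv) m - w m) = 0 by rw [mul_sub, hm, sub_self])
      rw [Matrix.mulVecLin_apply]
      exact sub_eq_zero.mp h13
    · rintro w ⟨t, rfl⟩
      rw [LinearMap.mem_ker]
      simp only [Matrix.mulVecLin_apply]
      exact d.aux_q1q2 t
  exact ⟨inj, part2, part3⟩
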